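/- arXiv:1811.04802 — 2 statements merged into one kernel-verified Lean document; each statement's English description precedes it below -/
import Mathlib

section
/- For κ > 0 and y, z ∈ ℝ³, the convolution of the Yukawa Green function with itself satisfies ∫_{ℝ³} G^κ(y−x) G^κ(x−z) dx = (1/(8πκ)) e^{−κ|y−z|}. -/
open MeasureTheory Real

noncomputable def yukawaG (κ : ℝ) (x : EuclideanSpace ℝ (Fin 3)) : ℝ :=
  Real.exp (-κ * ‖x‖) / (4 * Real.pi * ‖x‖)

open Set
open scoped ENNReal

lemma lintegral_image_deriv {s : Set ℝ} {f f' : ℝ → ℝ} (hs : MeasurableSet s)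
    (hf' : ∀ x ∈ s, HasDerivWithinAt f (f' x) s x) (hf : Set.InjOn f s) (g : ℝ → ℝ≥0∞) :
    ∫⁻ x in f '' s, g x = ∫⁻ x in s, ENNReal.ofReal |f' x| * g (f x) := by
  rw [lintegral_image_eq_lintegral_abs_det_fderiv_mul volume hs
    (fun x hx => (hf' x hx).hasFDerivWithinAt) hf g]
  simp only [ContinuousLinearMap.det_toSpanSingleton]

lemma lintegral_comp_polarCoord_symm' (g : ℝ × ℝ → ℝ≥0∞) :
    ∫⁻ p in polarCoord.target, ENNReal.ofReal p.1 * g (polarCoord.symm p) = ∫⁻ p, g p := by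
  set B : ℝ × ℝ → ℝ × ℝ →L[ℝ] ℝ × ℝ := fun p =>
    LinearMap.toContinuousLinearMap (Matrix.toLin (Module.Basis.finTwoProd ℝ) (Module.Basis.finTwoProd ℝ)
      !![Real.cos p.2, -p.1 * Real.sin p.2; Real.sin p.2, p.1 * Real.cos p.2])
  have hder : ∀ p ∈ polarCoord.target,
      HasFDerivWithinAt polarCoord.symm (B p) polarCoord.target p := fun p _ =>
    (hasFDerivAt_polarCoord_symm p).hasFDerivWithinAt
  have B_det : ∀ p, (B p).det = p.1 := by
    intro p
    conv_rhs => rw [← one_mul p.1, ← cos_sq_add_sin_sq p.2]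
    simp only [B, neg_mul, LinearMap.det_toContinuousLinearMap, LinearMap.det_toLin,
      Matrix.det_fin_two_of, sub_neg_eq_add]
    ring
  have hinj : Set.InjOn polarCoord.symm polarCoord.target := by
    have := polarCoord.symm.injOn
    rwa [polarCoord.symm_source] at this
  symm
  calc ∫⁻ p, g p = ∫⁻ p in polarCoord.source, g p := by
        rw [← setLIntegral_univ]
        exact setLIntegral_congr polarCoord_source_ae_eq_univ.symm
    _ = ∫⁻ p in polarCoord.symm '' polarCoord.target, g p := by
        rw [polarCoord.symm_image_target_eq_source]
    _ = ∫⁻ p in polarCoord.target, ENNReal.ofReal |(B p).det| * g (polarCoord.symm p) :=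
        lintegral_image_eq_lintegral_abs_det_fderiv_mul volume
          polarCoord.open_target.measurableSet hder hinj g
    _ = ∫⁻ p in polarCoord.target, ENNReal.ofReal p.1 * g (polarCoord.symm p) := by
        refine setLIntegral_congr_fun polarCoord.open_target.measurableSet ?_
        intro p hp
        beta_reduce
        rw [B_det, abs_of_pos hp.1]

lemma lintegral_exp_Ioi {κ : ℝ} (hκ : 0 < κ) (r : ℝ) :
    ∫⁻ u in Ioi r, ENNReal.ofReal (Real.exp (-κ * u)) = ENNReal.ofReal (Real.exp (-κ * r) / κ) := by
  rw [← ofReal_integral_eq_lintegral_ofReal (exp_neg_integrableOn_Ioi r hκ)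
    (Filter.Eventually.of_forall fun x => (Real.exp_pos _).le)]
  congr 1
  have hder : ∀ x ∈ Ici r, HasDerivAt (fun u : ℝ => -Real.exp (-κ * u) / κ)
      (Real.exp (-κ * x)) x := by
    intro x _
    have h1 : HasDerivAt (fun u : ℝ => -κ * u) (-κ) x := by
      simpa using (hasDerivAt_id x).const_mul (-κ)
    have h2 := (h1.exp).neg.div_const κ
    refine h2.congr_deriv ?_
    field_simp
  have htend : Filter.Tendsto (fun u : ℝ => -Real.exp (-κ * u) / κ) Filter.atTop (nhds 0) := by
    have h3 : Filter.Tendsto (fun u : ℝ => -κ * u) Filter.atTop Filter.atBot :=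
      Filter.Tendsto.const_mul_atTop_of_neg (neg_neg_iff_pos.mpr hκ) Filter.tendsto_id
    have h4 := (Real.tendsto_exp_atBot.comp h3).neg.div_const κ
    simpa using h4
  have := integral_Ioi_of_hasDerivAt_of_tendsto' hder (exp_neg_integrableOn_Ioi r hκ) htend
  rw [this]
  field_simp
  ring

lemma hasDeriv_sqrt_sq_add (c : ℝ) {ρ : ℝ} (hρ : 0 < ρ) :
    HasDerivAt (fun x : ℝ => Real.sqrt (x ^ 2 + c ^ 2)) (ρ / Real.sqrt (ρ ^ 2 + c ^ 2)) ρ := by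
  have h0 : ρ ^ 2 + c ^ 2 ≠ 0 := by positivity
  have h1 : HasDerivAt (fun x : ℝ => x ^ 2 + c ^ 2) (2 * ρ) ρ := by
    simpa using (hasDerivAt_pow 2 ρ).add_const (c ^ 2)
  have h2 := h1.sqrt h0
  convert h2 using 1
  rw [mul_comm 2 ρ, mul_comm 2 (Real.sqrt _)]
  rw [mul_div_mul_right _ _ (two_ne_zero)]

noncomputable def bip (c d x : ℝ) : ℝ := Real.sqrt (x ^ 2 + c ^ 2) + Real.sqrt (x ^ 2 + d ^ 2)

lemma bip_zero (c d : ℝ) : bip c d 0 = |c| + |d| := by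
  simp [bip, Real.sqrt_sq_eq_abs]

lemma bip_strictMonoOn (c d : ℝ) : StrictMonoOn (bip c d) (Ici 0) := by
  have h : ∀ e : ℝ, StrictMonoOn (fun x : ℝ => Real.sqrt (x ^ 2 + e ^ 2)) (Ici 0) := by
    intro e x hx y hy hxy
    exact Real.sqrt_lt_sqrt (by positivity)
      (by nlinarith [mem_Ici.mp hx])
  exact (h c).add (h d)

lemma bip_continuous (c d : ℝ) : Continuous (bip c d) := by
  unfold bip; fun_prop

lemma bip_self_le (c d : ℝ) {x : ℝ} (hx : 0 ≤ x) : x ≤ bip c d x := by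
  have h1 : x ≤ Real.sqrt (x ^ 2 + c ^ 2) := by
    rw [show x = Real.sqrt (x ^ 2) by rw [Real.sqrt_sq hx]]
    exact Real.sqrt_le_sqrt (by nlinarith [Real.sq_sqrt (sq_nonneg x)])
  have h2 : 0 ≤ Real.sqrt (x ^ 2 + d ^ 2) := Real.sqrt_nonneg _
  unfold bip
  nlinarith [Real.sqrt_sq hx]

lemma bip_image (c d : ℝ) : bip c d '' Ioi 0 = Ioi (|c| + |d|) := by
  apply Subset.antisymm
  · rintro _ ⟨x, hx, rfl⟩
    rw [← bip_zero c d]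
    exact bip_strictMonoOn c d self_mem_Ici (mem_Ici.mpr (le_of_lt (mem_Ioi.mp hx))) (mem_Ioi.mp hx)
  · intro u hu
    rw [mem_Ioi, ← bip_zero c d] at hu
    have h0 : (0:ℝ) ≤ bip c d 0 := by rw [bip_zero]; positivity
    have hu0 : 0 < u := lt_of_le_of_lt h0 hu
    have hfu : u ≤ bip c d u := bip_self_le c d hu0.le
    have : u ∈ Icc (bip c d 0) (bip c d u) := ⟨hu.le, hfu⟩
    obtain ⟨x, hx, hfx⟩ := intermediate_value_Icc hu0.le (bip_continuous c d).continuousOn this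
    refine ⟨x, ?_, hfx⟩
    rcases eq_or_lt_of_le hx.1 with h | h
    · exfalso; rw [← h] at hfx; rw [hfx] at hu; exact lt_irrefl _ hu
    · exact h

lemma inner_substitution {κ : ℝ} (c d : ℝ) :
    ∫⁻ ρ in Ioi (0:ℝ), ENNReal.ofReal (ρ * (Real.exp (-κ * (Real.sqrt (ρ ^ 2 + c ^ 2) +
        Real.sqrt (ρ ^ 2 + d ^ 2))) / (Real.sqrt (ρ ^ 2 + c ^ 2) * Real.sqrt (ρ ^ 2 + d ^ 2))))
      = ∫⁻ u in Ioi (|c| + |d|), ENNReal.ofReal (Real.exp (-κ * u) / u) := by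
  have hder : ∀ x ∈ Ioi (0:ℝ), HasDerivWithinAt (bip c d)
      (x / Real.sqrt (x ^ 2 + c ^ 2) + x / Real.sqrt (x ^ 2 + d ^ 2)) (Ioi 0) x := by
    intro x hx
    exact (((hasDeriv_sqrt_sq_add c hx).add (hasDeriv_sqrt_sq_add d hx)).hasDerivWithinAt)
  rw [← bip_image c d, lintegral_image_deriv measurableSet_Ioi hder
    ((bip_strictMonoOn c d).injOn.mono Ioi_subset_Ici_self) _]
  refine setLIntegral_congr_fun measurableSet_Ioi ?_
  intro ρ hρ
  beta_reduce
  rw [mem_Ioi] at hρ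
  have hc : 0 < Real.sqrt (ρ ^ 2 + c ^ 2) := Real.sqrt_pos.mpr (by positivity)
  have hd : 0 < Real.sqrt (ρ ^ 2 + d ^ 2) := Real.sqrt_pos.mpr (by positivity)
  rw [← ENNReal.ofReal_mul (abs_nonneg _)]
  congr 1
  rw [abs_of_pos (by positivity)]
  unfold bip
  have hsum : Real.sqrt (ρ ^ 2 + c ^ 2) + Real.sqrt (ρ ^ 2 + d ^ 2) ≠ 0 := by positivity
  field_simp
  ring

lemma set_m (r u : ℝ) (hr : 0 ≤ r) : {t : ℝ | |t| + |t - r| < u} =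
    if r < u then Ioo ((r - u) / 2) ((r + u) / 2) else (∅ : Set ℝ) := by
  split_ifs with h
  · ext t
    simp only [mem_setOf_eq, mem_Ioo]
    constructor
    · intro ht
      rcases abs_cases t with ⟨h1, h1'⟩ | ⟨h1, h1'⟩ <;>
        rcases abs_cases (t - r) with ⟨h2, h2'⟩ | ⟨h2, h2'⟩ <;>
        constructor <;> linarith
    · rintro ⟨h1, h2⟩
      rcases abs_cases t with ⟨h3, h3'⟩ | ⟨h3, h3'⟩ <;>
        rcases abs_cases (t - r) with ⟨h4, h4'⟩ | ⟨h4, h4'⟩ <;> linarith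
  · ext t
    simp only [mem_setOf_eq, mem_empty_iff_false, iff_false, not_lt]
    have := abs_sub t (t - r)
    simp only [sub_sub_cancel, abs_of_nonneg hr] at this
    push_neg at h
    linarith

lemma yuk_swap_integral {κ : ℝ} (hκ : 0 < κ) {r : ℝ} (hr : 0 ≤ r) :
    ∫⁻ t : ℝ, ∫⁻ u in Ioi (|t| + |t - r|), ENNReal.ofReal (Real.exp (-κ * u) / u)
      = ENNReal.ofReal (Real.exp (-κ * r) / κ) := by
  have hm : Continuous fun t : ℝ => |t| + |t - r| := by fun_prop
  set S : Set (ℝ × ℝ) := {p : ℝ × ℝ | |p.1| + |p.1 - r| < p.2} with hS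
  have hSm : MeasurableSet S :=
    measurableSet_lt (by fun_prop) measurable_snd
  have hmeas : Measurable fun u : ℝ => ENNReal.ofReal (Real.exp (-κ * u) / u) := by fun_prop
  calc ∫⁻ t : ℝ, ∫⁻ u in Ioi (|t| + |t - r|), ENNReal.ofReal (Real.exp (-κ * u) / u)
      = ∫⁻ t : ℝ, ∫⁻ u : ℝ, S.indicator (fun p : ℝ × ℝ =>
          ENNReal.ofReal (Real.exp (-κ * p.2) / p.2)) (t, u) := by
        congr 1; funext t
        rw [← lintegral_indicator measurableSet_Ioi]
        refine lintegral_congr fun u => ?_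
        simp [indicator_apply, S, mem_Ioi]
    _ = ∫⁻ u : ℝ, ∫⁻ t : ℝ, S.indicator (fun p : ℝ × ℝ =>
          ENNReal.ofReal (Real.exp (-κ * p.2) / p.2)) (t, u) := by
        apply lintegral_lintegral_swap
        exact ((hmeas.comp measurable_snd).indicator hSm).aemeasurable
    _ = ∫⁻ u : ℝ, ENNReal.ofReal (Real.exp (-κ * u) / u) *
          volume {t : ℝ | |t| + |t - r| < u} := by
        refine lintegral_congr fun u => ?_
        have : ∀ t : ℝ, S.indicator (fun p : ℝ × ℝ =>
            ENNReal.ofReal (Real.exp (-κ * p.2) / p.2)) (t, u)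
            = {t : ℝ | |t| + |t - r| < u}.indicator
                (fun _ => ENNReal.ofReal (Real.exp (-κ * u) / u)) t := by
          intro t; simp [indicator_apply, S]
        simp_rw [this]
        rw [lintegral_indicator_const (measurableSet_lt (by fun_prop) measurable_const)]
    _ = ∫⁻ u : ℝ, (Ioi r).indicator
          (fun u => ENNReal.ofReal (Real.exp (-κ * u) / u) * ENNReal.ofReal u) u := by
        refine lintegral_congr fun u => ?_
        rw [set_m r u hr]
        split_ifs with h
        · rw [indicator_of_mem (mem_Ioi.mpr h), Real.volume_Ioo]
          congr 2; ring
        · rw [indicator_of_notMem (by simpa using h)]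
          simp
    _ = ∫⁻ u in Ioi r, ENNReal.ofReal (Real.exp (-κ * u) / u) * ENNReal.ofReal u := by
        rw [lintegral_indicator measurableSet_Ioi]
    _ = ∫⁻ u in Ioi r, ENNReal.ofReal (Real.exp (-κ * u)) := by
        refine setLIntegral_congr_fun measurableSet_Ioi ?_
        intro u hu
        beta_reduce
        have hu0 : 0 < u := lt_of_le_of_lt hr (mem_Ioi.mp hu)
        rw [← ENNReal.ofReal_mul (by positivity), div_mul_cancel₀ _ hu0.ne']
    _ = ENNReal.ofReal (Real.exp (-κ * r) / κ) := lintegral_exp_Ioi hκ r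

lemma polar2d (F : ℝ → ℝ≥0∞) (hF : Measurable F) :
    ∫⁻ v : ℝ × ℝ, F (v.1 ^ 2 + v.2 ^ 2) =
      ENNReal.ofReal (2 * π) * ∫⁻ ρ in Ioi (0:ℝ), ENNReal.ofReal ρ * F (ρ ^ 2) := by
  rw [← lintegral_comp_polarCoord_symm' (fun v => F (v.1 ^ 2 + v.2 ^ 2))]
  have h1 : ∀ p : ℝ × ℝ, (polarCoord.symm p).1 ^ 2 + (polarCoord.symm p).2 ^ 2 = p.1 ^ 2 := by
    intro p
    have hp : polarCoord.symm p = (p.1 * Real.cos p.2, p.1 * Real.sin p.2) := rfl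
    rw [hp]
    simp only
    rw [mul_pow, mul_pow, ← mul_add]
    rw [Real.cos_sq_add_sin_sq, mul_one]
  simp_rw [h1]
  have ht : polarCoord.target = Ioi (0:ℝ) ×ˢ Ioo (-π) π := rfl
  rw [ht, Measure.volume_eq_prod, ← Measure.prod_restrict, lintegral_prod]
  · simp_rw [lintegral_const, Measure.restrict_apply MeasurableSet.univ, univ_inter,
      Real.volume_Ioo]
    rw [lintegral_mul_const' (ENNReal.ofReal (π - -π)) _ (by simp), mul_comm]
    congr 1
    rw [show π - -π = 2 * π by ring]
  · exact ((ENNReal.measurable_ofReal.comp measurable_fst).mul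
      ((hF.comp (measurable_fst.pow_const 2)))).aemeasurable

noncomputable def Phi (p : ℝ × (ℝ × ℝ)) : EuclideanSpace ℝ (Fin 3) :=
  (MeasurableEquiv.toLp 2 (Fin 3 → ℝ))
    ((MeasurableEquiv.piFinSuccAbove (fun _ : Fin 3 => ℝ) 0).symm
      (p.1, (MeasurableEquiv.finTwoArrow).symm p.2))

lemma Phi_measurePreserving : MeasurePreserving Phi volume volume := by
  have h1 := (EuclideanSpace.volume_preserving_symm_measurableEquiv_toLp (Fin 3)).symm
  have h2 := (volume_preserving_piFinSuccAbove (fun _ : Fin 3 => ℝ) 0).symm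
  have h3 := (MeasurePreserving.id (volume : Measure ℝ)).prod
      (volume_preserving_finTwoArrow ℝ).symm
  exact (h1.comp h2).comp h3

lemma norm_Phi (p : ℝ × (ℝ × ℝ)) :
    ‖Phi p‖ = Real.sqrt ((p.2.1 ^ 2 + p.2.2 ^ 2) + p.1 ^ 2) := by
  have h0 : Phi p 0 = p.1 := rfl
  have h1 : Phi p 1 = p.2.1 := rfl
  have h2 : Phi p 2 = p.2.2 := rfl
  rw [EuclideanSpace.norm_eq, Fin.sum_univ_three, h0, h1, h2]
  simp only [Real.norm_eq_abs, sq_abs]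
  congr 1; ring

lemma norm_sub_Phi (r : ℝ) (p : ℝ × (ℝ × ℝ)) :
    ‖(r • EuclideanSpace.single (0 : Fin 3) (1:ℝ)) - Phi p‖
      = Real.sqrt ((p.2.1 ^ 2 + p.2.2 ^ 2) + (p.1 - r) ^ 2) := by
  set a : EuclideanSpace ℝ (Fin 3) := r • EuclideanSpace.single (0 : Fin 3) (1:ℝ) with ha
  have ha0 : a 0 = r := by simp [ha, EuclideanSpace.single_apply]
  have ha1 : a 1 = 0 := by simp [ha, EuclideanSpace.single_apply]
  have ha2 : a 2 = 0 := by simp [ha, EuclideanSpace.single_apply]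
  have h0 : (a - Phi p) 0 = a 0 - p.1 := rfl
  have h1 : (a - Phi p) 1 = a 1 - p.2.1 := rfl
  have h2 : (a - Phi p) 2 = a 2 - p.2.2 := rfl
  rw [EuclideanSpace.norm_eq, Fin.sum_univ_three, h0, h1, h2, ha0, ha1, ha2]
  simp only [Real.norm_eq_abs, sq_abs]
  congr 1; ring

lemma yukawa_prod_eq {κ : ℝ} (s1 s2 : ℝ) :
    (Real.exp (-κ * s1) / (4 * π * s1)) * (Real.exp (-κ * s2) / (4 * π * s2))
      = (1 / (16 * π ^ 2)) * (Real.exp (-κ * (s1 + s2)) / (s1 * s2)) := by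
  rw [div_mul_div_comm, div_mul_div_comm,
    show -κ * (s1 + s2) = -κ * s1 + -κ * s2 by ring, Real.exp_add, one_mul]
  congr 1
  ring

lemma yukawaG_nonneg (κ : ℝ) (x : EuclideanSpace ℝ (Fin 3)) : 0 ≤ yukawaG κ x := by
  unfold yukawaG
  positivity

lemma yukawa_key {κ : ℝ} (hκ : 0 < κ) {r : ℝ} (hr : 0 ≤ r) :
    ∫ x : EuclideanSpace ℝ (Fin 3),
      yukawaG κ ((r • EuclideanSpace.single (0 : Fin 3) (1:ℝ)) - x) * yukawaG κ x
      = Real.exp (-κ * r) / (8 * π * κ) := by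
  set a : EuclideanSpace ℝ (Fin 3) := r • EuclideanSpace.single (0 : Fin 3) (1:ℝ) with ha
  have hymeas : Measurable (yukawaG κ) := by
    unfold yukawaG; fun_prop
  have hmeas : Measurable fun x : EuclideanSpace ℝ (Fin 3) => yukawaG κ (a - x) * yukawaG κ x :=
    (hymeas.comp (measurable_const.sub measurable_id)).mul hymeas
  have hnn : 0 ≤ᵐ[volume] fun x : EuclideanSpace ℝ (Fin 3) =>
      yukawaG κ (a - x) * yukawaG κ x := by
    filter_upwards with x
    exact mul_nonneg (yukawaG_nonneg _ _) (yukawaG_nonneg _ _)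
  rw [integral_eq_lintegral_of_nonneg_ae hnn hmeas.aestronglyMeasurable]
  have hFmeas : ∀ c : ℝ, Measurable fun q : ℝ =>
      ENNReal.ofReal (Real.exp (-κ * (Real.sqrt (q + c ^ 2) + Real.sqrt (q + (c - r) ^ 2))) /
        (Real.sqrt (q + c ^ 2) * Real.sqrt (q + (c - r) ^ 2))) := by
    intro c; fun_prop
  have hL : (∫⁻ x, ENNReal.ofReal (yukawaG κ (a - x) * yukawaG κ x))
      = ENNReal.ofReal (Real.exp (-κ * r) / (8 * π * κ)) := by
    calc (∫⁻ x, ENNReal.ofReal (yukawaG κ (a - x) * yukawaG κ x))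
        = ∫⁻ p : ℝ × (ℝ × ℝ), ENNReal.ofReal (yukawaG κ (a - Phi p) * yukawaG κ (Phi p)) :=
          (Phi_measurePreserving.lintegral_comp (ENNReal.measurable_ofReal.comp hmeas)).symm
      _ = ∫⁻ p : ℝ × (ℝ × ℝ), ENNReal.ofReal (1 / (16 * π ^ 2)) *
            ENNReal.ofReal (Real.exp (-κ * (Real.sqrt ((p.2.1 ^ 2 + p.2.2 ^ 2) + (p.1 - r) ^ 2)
                + Real.sqrt ((p.2.1 ^ 2 + p.2.2 ^ 2) + p.1 ^ 2))) /
              (Real.sqrt ((p.2.1 ^ 2 + p.2.2 ^ 2) + (p.1 - r) ^ 2)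
                * Real.sqrt ((p.2.1 ^ 2 + p.2.2 ^ 2) + p.1 ^ 2))) := by
          refine lintegral_congr fun p => ?_
          rw [← ENNReal.ofReal_mul (by positivity)]
          congr 1
          unfold yukawaG
          rw [ha, norm_sub_Phi r p, norm_Phi p]
          exact yukawa_prod_eq _ _
      _ = ENNReal.ofReal (1 / (16 * π ^ 2)) *
            ∫⁻ p : ℝ × (ℝ × ℝ), ENNReal.ofReal
              (Real.exp (-κ * (Real.sqrt ((p.2.1 ^ 2 + p.2.2 ^ 2) + (p.1 - r) ^ 2)
                + Real.sqrt ((p.2.1 ^ 2 + p.2.2 ^ 2) + p.1 ^ 2))) /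
              (Real.sqrt ((p.2.1 ^ 2 + p.2.2 ^ 2) + (p.1 - r) ^ 2)
                * Real.sqrt ((p.2.1 ^ 2 + p.2.2 ^ 2) + p.1 ^ 2))) :=
          lintegral_const_mul' _ _ (by simp)
      _ = ENNReal.ofReal (1 / (16 * π ^ 2)) *
            ∫⁻ t : ℝ, ∫⁻ v : ℝ × ℝ, ENNReal.ofReal
              (Real.exp (-κ * (Real.sqrt ((v.1 ^ 2 + v.2 ^ 2) + (t - r) ^ 2)
                + Real.sqrt ((v.1 ^ 2 + v.2 ^ 2) + t ^ 2))) /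
              (Real.sqrt ((v.1 ^ 2 + v.2 ^ 2) + (t - r) ^ 2)
                * Real.sqrt ((v.1 ^ 2 + v.2 ^ 2) + t ^ 2))) := by
          rw [Measure.volume_eq_prod, lintegral_prod]
          exact (by fun_prop : Measurable fun p : ℝ × (ℝ × ℝ) => ENNReal.ofReal
              (Real.exp (-κ * (Real.sqrt ((p.2.1 ^ 2 + p.2.2 ^ 2) + (p.1 - r) ^ 2)
                + Real.sqrt ((p.2.1 ^ 2 + p.2.2 ^ 2) + p.1 ^ 2))) /
              (Real.sqrt ((p.2.1 ^ 2 + p.2.2 ^ 2) + (p.1 - r) ^ 2)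
                * Real.sqrt ((p.2.1 ^ 2 + p.2.2 ^ 2) + p.1 ^ 2)))).aemeasurable
      _ = ENNReal.ofReal (1 / (16 * π ^ 2)) *
            ∫⁻ t : ℝ, ENNReal.ofReal (2 * π) * ∫⁻ ρ in Ioi (0:ℝ), ENNReal.ofReal ρ *
              ENNReal.ofReal
              (Real.exp (-κ * (Real.sqrt (ρ ^ 2 + (t - r) ^ 2)
                + Real.sqrt (ρ ^ 2 + t ^ 2))) /
              (Real.sqrt (ρ ^ 2 + (t - r) ^ 2)
                * Real.sqrt (ρ ^ 2 + t ^ 2))) := by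
          congr 1
          refine lintegral_congr fun t => ?_
          exact polar2d (fun q => ENNReal.ofReal
              (Real.exp (-κ * (Real.sqrt (q + (t - r) ^ 2) + Real.sqrt (q + t ^ 2))) /
              (Real.sqrt (q + (t - r) ^ 2) * Real.sqrt (q + t ^ 2)))) (by fun_prop)
      _ = ENNReal.ofReal (1 / (16 * π ^ 2)) *
            ∫⁻ t : ℝ, ENNReal.ofReal (2 * π) *
              ∫⁻ u in Ioi (|t - r| + |t|), ENNReal.ofReal (Real.exp (-κ * u) / u) := by
          congr 1
          refine lintegral_congr fun t => ?_
          congr 1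
          rw [← inner_substitution (κ := κ) (t - r) t]
          refine setLIntegral_congr_fun measurableSet_Ioi ?_
          intro ρ hρ
          beta_reduce
          rw [← ENNReal.ofReal_mul (le_of_lt (mem_Ioi.mp hρ))]
      _ = ENNReal.ofReal (1 / (16 * π ^ 2)) * (ENNReal.ofReal (2 * π) *
            ∫⁻ t : ℝ, ∫⁻ u in Ioi (|t| + |t - r|), ENNReal.ofReal (Real.exp (-κ * u) / u)) := by
          rw [lintegral_const_mul' _ _ ENNReal.ofReal_ne_top]
          congr 1
          congr 1
          refine lintegral_congr fun t => ?_
          rw [add_comm]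
      _ = ENNReal.ofReal (1 / (16 * π ^ 2)) * (ENNReal.ofReal (2 * π) *
            ENNReal.ofReal (Real.exp (-κ * r) / κ)) := by
          rw [yuk_swap_integral hκ hr]
      _ = ENNReal.ofReal (Real.exp (-κ * r) / (8 * π * κ)) := by
          rw [← ENNReal.ofReal_mul (by positivity), ← ENNReal.ofReal_mul (by positivity)]
          congr 1
          have hπ : π ≠ 0 := Real.pi_ne_zero
          field_simp
          ring
  rw [hL, ENNReal.toReal_ofReal (by positivity)]

lemma yukawaG_congr {κ : ℝ} {u v : EuclideanSpace ℝ (Fin 3)} (h : ‖u‖ = ‖v‖) :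
    yukawaG κ u = yukawaG κ v := by
  unfold yukawaG; rw [h]

theorem yukawa_convolution (κ : ℝ) (hκ : 0 < κ) (y z : EuclideanSpace ℝ (Fin 3)) :
    ∫ x : EuclideanSpace ℝ (Fin 3), yukawaG κ (y - x) * yukawaG κ (x - z) =
      (1 / (8 * Real.pi * κ)) * Real.exp (-κ * ‖y - z‖) := by
  set w : EuclideanSpace ℝ (Fin 3) := y - z with hw
  set e : EuclideanSpace ℝ (Fin 3) := EuclideanSpace.single (0 : Fin 3) (1:ℝ) with he
  have step1 : ∫ x : EuclideanSpace ℝ (Fin 3), yukawaG κ (y - x) * yukawaG κ (x - z)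
      = ∫ x : EuclideanSpace ℝ (Fin 3), yukawaG κ (w - x) * yukawaG κ x := by
    rw [← integral_add_right_eq_self (μ := volume)
      (fun x : EuclideanSpace ℝ (Fin 3) => yukawaG κ (y - x) * yukawaG κ (x - z)) z]
    refine integral_congr_ae (Filter.Eventually.of_forall fun x => ?_)
    have h1 : y - (x + z) = w - x := by rw [hw]; abel
    have h2 : x + z - z = x := by abel
    simp only [h1, h2]
  have hre : ‖((‖w‖ : ℝ) • e : EuclideanSpace ℝ (Fin 3))‖ = ‖w‖ := by
    rw [norm_smul, he, EuclideanSpace.norm_single]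
    simp
  set T := Submodule.reflection (ℝ ∙ (((‖w‖ : ℝ) • e) - w))ᗮ with hT
  have hTw : T ((‖w‖ : ℝ) • e) = w := Submodule.reflection_sub hre
  have hTmp : MeasurePreserving T volume volume := T.measurePreserving
  have step2 : ∫ x : EuclideanSpace ℝ (Fin 3), yukawaG κ (w - x) * yukawaG κ x
      = ∫ x : EuclideanSpace ℝ (Fin 3), yukawaG κ ((‖w‖ : ℝ) • e - x) * yukawaG κ x := by
    rw [← hTmp.integral_comp T.toHomeomorph.toMeasurableEquiv.measurableEmbedding
      (fun x : EuclideanSpace ℝ (Fin 3) => yukawaG κ (w - x) * yukawaG κ x)]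
    refine integral_congr_ae (Filter.Eventually.of_forall fun x => ?_)
    have h1 : yukawaG κ (w - T x) = yukawaG κ ((‖w‖ : ℝ) • e - x) := by
      have h3 : w - T x = T ((‖w‖ : ℝ) • e - x) := by rw [map_sub, hTw]
      rw [h3]
      exact yukawaG_congr (T.norm_map _)
    have h2 : yukawaG κ (T x) = yukawaG κ x := yukawaG_congr (T.norm_map _)
    simp only [Homeomorph.toMeasurableEquiv_coe, LinearIsometryEquiv.coe_toHomeomorph]
    rw [h1, h2]
  rw [step1, step2, yukawa_key hκ (norm_nonneg w)]
  rw [div_eq_mul_inv, mul_comm, ← one_div]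
end

section
/- For κ > 0 and r > 0, the integral ∫_{ℝ³} e^{i p·y} / (|p|² + κ²)² dp equals (π²/κ) e^{−κ|y|} for every y ∈ ℝ³ with y ≠ 0. -/
open MeasureTheory Real Complex
open Set

section YukawaAux

private lemma yuk_deriv (α β : ℝ) {s : ℝ} (hs : s ≠ 0) :
    HasDerivAt (fun s : ℝ => α * s - β / s) (α + β / s ^ 2) s := by
  have h1 : HasDerivAt (fun s : ℝ => α * s) α s := by
    simpa using (hasDerivAt_id s).const_mul α
  have h2 : HasDerivAt (fun s : ℝ => β / s) (β * -(s ^ 2)⁻¹) s := by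
    simpa [div_eq_mul_inv] using (hasDerivAt_inv hs).const_mul β
  rw [show α + β / s ^ 2 = α - β * -(s ^ 2)⁻¹ by ring]
  exact h1.sub h2

private lemma yuk_image (α β : ℝ) (hα : 0 < α) (hβ : 0 < β) :
    (fun s : ℝ => α * s - β / s) '' Ioi 0 = univ := by
  apply eq_univ_of_forall
  intro v
  have hD : (0:ℝ) ≤ v ^ 2 + 4 * α * β := by positivity
  set w := Real.sqrt (v ^ 2 + 4 * α * β) with hw
  have hw2 : w ^ 2 = v ^ 2 + 4 * α * β := Real.sq_sqrt hD
  have hwv : |v| < w := by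
    rw [← Real.sqrt_sq_eq_abs, hw]
    exact Real.sqrt_lt_sqrt (sq_nonneg v) (by nlinarith)
  have hvw : 0 < v + w := by
    have : -v < w := lt_of_le_of_lt (neg_le_abs v) hwv
    linarith
  refine ⟨(v + w) / (2 * α), div_pos hvw (by linarith), ?_⟩
  have h1 : v + w ≠ 0 := hvw.ne'
  have h2 : α ≠ 0 := hα.ne'
  show α * ((v + w) / (2 * α)) - β / ((v + w) / (2 * α)) = v
  rw [div_div_eq_mul_div]
  field_simp
  linear_combination hw2

private lemma yuk_strictMono (α β : ℝ) (hα : 0 < α) (hβ : 0 < β) :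
    StrictMonoOn (fun s : ℝ => α * s - β / s) (Ioi 0) := by
  intro s hs t ht hst
  have h1 : α * s < α * t := by exact (mul_lt_mul_iff_right₀ hα).2 hst
  have h2 : β / t < β / s := div_lt_div_of_pos_left hβ (mem_Ioi.1 hs) hst
  simp only
  linarith

/-- The Glasser-type integral `∫ s in (0,∞), exp (-(a s² + b / s²))`. -/
private lemma yuk_bessel (a b : ℝ) (ha : 0 < a) (hb : 0 < b) :
    ∫ s in Ioi (0:ℝ), Real.exp (-(a * s ^ 2 + b / s ^ 2)) =
      Real.sqrt π / (2 * Real.sqrt a) * Real.exp (-(2 * Real.sqrt (a * b))) := by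
  set α := Real.sqrt a with hαd
  set β := Real.sqrt b with hβd
  have hα : 0 < α := Real.sqrt_pos.2 ha
  have hβ : 0 < β := Real.sqrt_pos.2 hb
  have hα2 : α ^ 2 = a := Real.sq_sqrt ha.le
  have hβ2 : β ^ 2 = b := Real.sq_sqrt hb.le
  set f : ℝ → ℝ := fun s => α * s - β / s with hfd
  -- pointwise identity
  have hpt : ∀ s : ℝ, s ∈ Ioi (0:ℝ) →
      a * s ^ 2 + b / s ^ 2 = f s ^ 2 + 2 * (α * β) := by
    intro s hs
    have hs0 : s ≠ 0 := (mem_Ioi.1 hs).ne'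
    simp only [hfd]
    field_simp
    linear_combination (-(s^4)) * hα2 - hβ2
  -- integrability of the two parts
  have hmeas : ContinuousOn (fun s : ℝ => Real.exp (-f s ^ 2)) (Ioi 0) := by
    apply Real.continuous_exp.comp_continuousOn
    apply ContinuousOn.neg
    apply ContinuousOn.pow
    exact (continuousOn_const.mul continuousOn_id).sub
      (continuousOn_const.div continuousOn_id (fun x hx => (mem_Ioi.1 hx).ne'))
  have hdom : IntegrableOn (fun s : ℝ => Real.exp (2 * (α * β)) * Real.exp (-a * s ^ 2))
      (Ioi 0) := ((integrable_exp_neg_mul_sq ha).integrableOn).const_mul _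
  have key_bound : ∀ s : ℝ, s ∈ Ioi 0 →
      Real.exp (-f s ^ 2) = Real.exp (2 * (α * β)) * Real.exp (-(a * s ^ 2 + b / s ^ 2)) := by
    intro s hs
    rw [← Real.exp_add, hpt s hs]; ring_nf
  have hJint : IntegrableOn (fun s : ℝ => Real.exp (-f s ^ 2)) (Ioi 0) := by
    apply Integrable.mono' hdom (hmeas.aestronglyMeasurable measurableSet_Ioi)
    filter_upwards [ae_restrict_mem measurableSet_Ioi] with s hs
    rw [Real.norm_eq_abs, abs_of_pos (Real.exp_pos _), key_bound s hs]
    apply mul_le_mul_of_nonneg_left _ (Real.exp_pos _).le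
    apply Real.exp_le_exp.2
    have : 0 ≤ b / s ^ 2 := by positivity
    nlinarith
  have hLint : IntegrableOn (fun s : ℝ => β / s ^ 2 * Real.exp (-f s ^ 2)) (Ioi 0) := by
    have hmeas2 : ContinuousOn (fun s : ℝ => β / s ^ 2 * Real.exp (-f s ^ 2)) (Ioi 0) := by
      apply ContinuousOn.mul _ hmeas
      exact continuousOn_const.div (continuous_pow 2).continuousOn
        (fun x hx => pow_ne_zero 2 (mem_Ioi.1 hx).ne')
    apply Integrable.mono' (hdom.const_mul (β / b)) (hmeas2.aestronglyMeasurable measurableSet_Ioi)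
    filter_upwards [ae_restrict_mem measurableSet_Ioi] with s hs
    have hs0 : 0 < s := mem_Ioi.1 hs
    rw [Real.norm_eq_abs, abs_of_pos (mul_pos (div_pos hβ (pow_pos hs0 2)) (Real.exp_pos _)),
      key_bound s hs]
    have h1 : β / s ^ 2 * Real.exp (-(b / s ^ 2)) ≤ β / b := by
      rw [div_mul_eq_mul_div, div_le_div_iff₀ (pow_pos hs0 2) hb]
      have h2 : b / s ^ 2 ≤ Real.exp (b / s ^ 2) := (Real.add_one_le_exp _).trans' (by linarith)
      calc β * Real.exp (-(b / s ^ 2)) * b = β * (b / s ^2 * Real.exp (-(b / s ^ 2))) * s ^ 2 := by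
            field_simp
        _ ≤ β * 1 * s ^ 2 := by
            apply mul_le_mul_of_nonneg_right _ (by positivity)
            apply mul_le_mul_of_nonneg_left _ hβ.le
            rw [Real.exp_neg, ← div_eq_mul_inv, div_le_one (Real.exp_pos _)]
            exact h2
        _ = β * s ^ 2 := by ring
    calc β / s ^ 2 * (Real.exp (2 * (α * β)) * Real.exp (-(a * s ^ 2 + b / s ^ 2)))
        = Real.exp (2 * (α * β)) * (β / s ^ 2 * Real.exp (-(b / s ^2))) * Real.exp (-(a * s^2)) := by
          rw [neg_add, Real.exp_add]; ring
      _ ≤ Real.exp (2 * (α * β)) * (β / b) * Real.exp (-(a * s ^ 2)) := by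
          apply mul_le_mul_of_nonneg_right _ (Real.exp_pos _).le
          exact mul_le_mul_of_nonneg_left h1 (Real.exp_pos _).le
      _ = β / b * (Real.exp (2 * (α * β)) * Real.exp (-a * s ^ 2)) := by rw [neg_mul]; ring
  -- change of variables u = f s : (0,∞) → ℝ
  have hK : ∫ u : ℝ, Real.exp (-u ^ 2) =
      ∫ s in Ioi (0:ℝ), (α + β / s ^ 2) * Real.exp (-f s ^ 2) := by
    rw [← setIntegral_univ, ← yuk_image α β hα hβ]
    rw [integral_image_eq_integral_abs_deriv_smul measurableSet_Ioi
      (fun s hs => ((yuk_deriv α β (mem_Ioi.1 hs).ne')).hasDerivWithinAt)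
      ((yuk_strictMono α β hα hβ).injOn) (fun u => Real.exp (-u ^ 2))]
    apply setIntegral_congr_fun measurableSet_Ioi
    intro s hs
    have hs0 : 0 < s := mem_Ioi.1 hs
    simp only [hfd, smul_eq_mul]
    rw [abs_of_pos (add_pos hα (div_pos hβ (pow_pos hs0 2)))]
  -- change of variables s ↦ (β/α)/s sends L to J
  have hLJ : ∫ s in Ioi (0:ℝ), Real.exp (-f s ^ 2) =
      ∫ s in Ioi (0:ℝ), (β / α) / s ^ 2 * Real.exp (-f s ^ 2) := by
    set c := β / α with hcd
    have hc : 0 < c := div_pos hβ hα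
    have himg : (fun s : ℝ => c / s) '' Ioi 0 = Ioi 0 := by
      apply Subset.antisymm
      · rintro v ⟨s, hs, rfl⟩; exact div_pos hc (mem_Ioi.1 hs)
      · intro v hv; exact ⟨c / v, div_pos hc (mem_Ioi.1 hv), by
          field_simp⟩
    have hinj : InjOn (fun s : ℝ => c / s) (Ioi 0) := by
      intro s hs t ht h
      have hs0 : s ≠ 0 := (mem_Ioi.1 hs).ne'
      have ht0 : t ≠ 0 := (mem_Ioi.1 ht).ne'
      field_simp at h
      exact h.symm
    have hder : ∀ s ∈ Ioi (0:ℝ), HasDerivWithinAt (fun s : ℝ => c / s) (-(c / s ^ 2)) (Ioi 0) s := by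
      intro s hs
      have h4 : HasDerivAt (fun s : ℝ => c / s) (c * -(s ^ 2)⁻¹) s := by
        simpa [div_eq_mul_inv] using (hasDerivAt_inv (mem_Ioi.1 hs).ne').const_mul c
      have h3 : c * -(s ^ 2)⁻¹ = -(c / s ^ 2) := by field_simp
      rw [← h3]
      exact h4.hasDerivWithinAt
    have := integral_image_eq_integral_abs_deriv_smul measurableSet_Ioi hder hinj
      (fun u => Real.exp (-f u ^ 2))
    rw [himg] at this
    rw [this]
    apply setIntegral_congr_fun measurableSet_Ioi
    intro s hs
    have hs0 : 0 < s := mem_Ioi.1 hs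
    have hfc : f (c / s) = -f s := by
      simp only [hfd, hcd]
      field_simp
      ring
    simp only [smul_eq_mul]
    rw [hfc, neg_sq, abs_neg, abs_of_pos (div_pos hc (pow_pos hs0 2))]
  -- combine
  have hsplit : ∫ s in Ioi (0:ℝ), (α + β / s ^ 2) * Real.exp (-f s ^ 2)
      = α * (∫ s in Ioi (0:ℝ), Real.exp (-f s ^ 2))
        + ∫ s in Ioi (0:ℝ), β / s ^ 2 * Real.exp (-f s ^ 2) := by
    rw [← integral_const_mul, ← integral_add (hJint.const_mul α) hLint]
    apply setIntegral_congr_fun measurableSet_Ioi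
    intro s hs
    ring
  have hL' : ∫ s in Ioi (0:ℝ), β / s ^ 2 * Real.exp (-f s ^ 2)
      = α * (∫ s in Ioi (0:ℝ), Real.exp (-f s ^ 2)) := by
    rw [hLJ, ← integral_const_mul]
    apply setIntegral_congr_fun measurableSet_Ioi
    intro s hs
    have hs0 : (0:ℝ) < s := mem_Ioi.1 hs
    field_simp
  have hgauss : ∫ u : ℝ, Real.exp (-u ^ 2) = Real.sqrt π := by
    have := integral_gaussian 1
    simp only [one_mul, neg_mul, div_one] at this
    simpa using this
  have hJval : ∫ s in Ioi (0:ℝ), Real.exp (-f s ^ 2) = Real.sqrt π / (2 * α) := by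
    have h5 : Real.sqrt π = 2 * α * ∫ s in Ioi (0:ℝ), Real.exp (-f s ^ 2) := by
      rw [← hgauss, hK, hsplit, hL']; ring
    rw [h5]
    field_simp
  have hab : Real.sqrt (a * b) = α * β := Real.sqrt_mul ha.le b
  rw [hab]
  have hcongr : ∀ s ∈ Ioi (0:ℝ), Real.exp (-(a * s ^ 2 + b / s ^ 2))
      = Real.exp (-(2 * (α * β))) * Real.exp (-f s ^ 2) := by
    intro s hs
    rw [← Real.exp_add]
    congr 1
    linarith [hpt s hs]
  rw [setIntegral_congr_fun measurableSet_Ioi hcongr, integral_const_mul, hJval]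
  ring

private lemma yuk_laplace {r : ℝ} (hr : 0 < r) :
    ∫ t in Ioi (0:ℝ), t * Real.exp (-(r * t)) = 1 / r ^ 2 := by
  have h := Real.integral_rpow_mul_exp_neg_mul_Ioi (by norm_num : (0:ℝ) < 2) hr
  rw [Real.Gamma_two, mul_one] at h
  have h2 : ∫ t in Ioi (0:ℝ), t * Real.exp (-(r * t))
      = ∫ t in Ioi (0:ℝ), t ^ ((2:ℝ) - 1) * Real.exp (-(r * t)) := by
    apply setIntegral_congr_fun measurableSet_Ioi
    intro t ht
    norm_num
  rw [h2, h]
  rw [show ((2:ℝ)) = ((2:ℕ):ℝ) by norm_num, Real.rpow_natCast]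
  ring

private lemma yuk_half_integrable {r : ℝ} (hr : 0 < r) :
    IntegrableOn (fun t : ℝ => t ^ (-(1/2) : ℝ) * Real.exp (-(r * t))) (Ioi 0) := by
  have h := integrableOn_rpow_mul_exp_neg_mul_rpow (s := -(1/2)) (p := 1)
    (by norm_num) zero_lt_one hr
  apply h.congr_fun ?_ measurableSet_Ioi
  intro t ht
  simp [Real.rpow_one, neg_mul]

end YukawaAux

theorem fourier_integral_yukawa (κ r : ℝ) (hκ : 0 < κ) (hr : 0 < r)
    (y : EuclideanSpace ℝ (Fin 3)) (hy : y ≠ 0) :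
    ∫ p : EuclideanSpace ℝ (Fin 3),
        Complex.exp (Complex.I * (inner ℝ p y : ℝ)) / ((‖p‖ ^ 2 + κ ^ 2 : ℝ) : ℂ) ^ 2 =
      ((Real.pi ^ 2 / κ) * Real.exp (-κ * ‖y‖) : ℝ) := by
  have h3 : Module.finrank ℝ (EuclideanSpace ℝ (Fin 3)) = 3 := finrank_euclideanSpace_fin
  have hκ2 : (0:ℝ) < κ ^ 2 := by positivity
  have hy0 : (0:ℝ) < ‖y‖ := norm_pos_iff.2 hy
  set B : ℝ := ‖y‖ ^ 2 / 4 with hBd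
  have hB : 0 < B := by positivity
  set F : ℝ → EuclideanSpace ℝ (Fin 3) → ℂ := fun t p =>
    (t : ℂ) * Complex.exp (Complex.I * ((inner ℝ p y : ℝ) : ℂ)
      - ((‖p‖ ^ 2 + κ ^ 2 : ℝ) : ℂ) * (t : ℂ)) with hFd
  -- Step A: pointwise Laplace representation
  have stepA : ∀ p : EuclideanSpace ℝ (Fin 3),
      Complex.exp (Complex.I * ((inner ℝ p y : ℝ) : ℂ)) / ((‖p‖ ^ 2 + κ ^ 2 : ℝ) : ℂ) ^ 2
        = ∫ t in Ioi (0:ℝ), F t p := by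
    intro p
    have hc : (0:ℝ) < ‖p‖ ^ 2 + κ ^ 2 := by positivity
    set c : ℝ := ‖p‖ ^ 2 + κ ^ 2 with hcd
    set x : ℝ := (inner ℝ p y : ℝ) with hxd
    have h1 : ∀ t : ℝ, (t : ℂ) * Complex.exp (Complex.I * (x:ℂ) - (c:ℂ) * (t:ℂ))
        = Complex.exp (Complex.I * (x:ℂ)) * ((t * Real.exp (-(c * t)) : ℝ) : ℂ) := by
      intro t
      rw [sub_eq_add_neg, Complex.exp_add]
      push_cast
      ring
    rw [setIntegral_congr_fun measurableSet_Ioi (fun t _ => h1 t), integral_const_mul]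
    rw [show (∫ a in Ioi (0:ℝ), ((a * Real.exp (-(c * a)) : ℝ) : ℂ))
        = (((∫ a in Ioi (0:ℝ), a * Real.exp (-(c * a))) : ℝ) : ℂ) from integral_ofReal]
    rw [yuk_laplace hc]
    push_cast
    rw [div_eq_mul_inv, mul_one_div, div_eq_mul_inv]
  -- shared rearrangement of the integrand
  have hsplit : ∀ (t : ℝ) (p : EuclideanSpace ℝ (Fin 3)),
      F t p = ((t:ℂ) * Complex.exp ((-(κ^2*t) : ℝ) : ℂ))
        * Complex.exp (-(t:ℂ) * (‖p‖:ℂ)^2 + Complex.I * ((inner ℝ y p : ℝ) : ℂ)) := by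
    intro t p
    simp only [hFd]
    rw [show (inner ℝ y p : ℝ) = (inner ℝ p y : ℝ) from real_inner_comm p y,
      mul_assoc, ← Complex.exp_add]
    congr 2
    push_cast
    ring
  -- norm of the integrand
  have hnormpt : ∀ (t : ℝ), 0 < t → ∀ (p : EuclideanSpace ℝ (Fin 3)),
      ‖F t p‖ = t * Real.exp (-(κ^2*t)) * Real.exp (-t * ‖p‖^2) := by
    intro t ht p
    simp only [hFd, norm_mul, Complex.norm_real, Real.norm_eq_abs,
      Complex.norm_exp]
    rw [abs_of_pos ht, mul_assoc, ← Real.exp_add]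
    congr 1
    simp [Complex.sub_re, Complex.mul_re, ← Complex.ofReal_pow]
    ring
  -- the p-integral of the norm
  have hnormint : ∀ (t : ℝ), 0 < t →
      (∫ p : EuclideanSpace ℝ (Fin 3), ‖F t p‖)
        = π ^ ((3:ℝ)/2) * (t ^ (-(1/2):ℝ) * Real.exp (-(κ^2*t))) := by
    intro t ht
    rw [integral_congr_ae (Filter.Eventually.of_forall (hnormpt t ht))]
    rw [MeasureTheory.integral_const_mul, GaussianFourier.integral_rexp_neg_mul_sq_norm ht, h3]
    have e1 : (π / t) ^ (((3:ℕ):ℝ)/2) = π ^ ((3:ℝ)/2) / t ^ ((3:ℝ)/2) := by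
      norm_num
      exact Real.div_rpow pi_pos.le ht.le ((3:ℝ)/2)
    have e2 : t ^ (-(1/2):ℝ) = t / t ^ ((3:ℝ)/2) := by
      have h5 := Real.rpow_sub ht 1 ((3:ℝ)/2)
      rw [Real.rpow_one] at h5
      rw [show (-(1/2):ℝ) = 1 - (3:ℝ)/2 by norm_num, h5]
    rw [e1, e2]
    have ht32 : t ^ ((3:ℝ)/2) ≠ 0 := (Real.rpow_pos_of_pos ht _).ne'
    field_simp
  -- Step B: Fubini integrability
  have hInt : Integrable (Function.uncurry F)
      ((volume.restrict (Ioi (0:ℝ))).prod volume) := by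
    have hmeas : AEStronglyMeasurable (Function.uncurry F)
        ((volume.restrict (Ioi (0:ℝ))).prod volume) := by
      apply Continuous.aestronglyMeasurable
      apply Continuous.mul
      · exact Complex.continuous_ofReal.comp continuous_fst
      · apply Complex.continuous_exp.comp
        apply Continuous.sub
        · exact continuous_const.mul
            (Complex.continuous_ofReal.comp (continuous_snd.inner continuous_const))
        · exact (Complex.continuous_ofReal.comp
            (((continuous_snd.norm).pow 2).add continuous_const)).mul
            (Complex.continuous_ofReal.comp continuous_fst)
    refine (integrable_prod_iff hmeas).2 ⟨?_, ?_⟩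
    · filter_upwards [ae_restrict_mem measurableSet_Ioi] with t ht
      have hb : 0 < ((t:ℂ)).re := by simpa using (mem_Ioi.1 ht)
      have h6 := (GaussianFourier.integrable_cexp_neg_mul_sq_norm_add
        (V := EuclideanSpace ℝ (Fin 3))
        hb Complex.I y).const_mul ((t:ℂ) * Complex.exp ((-(κ^2*t) : ℝ) : ℂ))
      exact h6.congr (Filter.Eventually.of_forall (fun p => (hsplit t p).symm))
    · apply Integrable.congr (((yuk_half_integrable hκ2).const_mul (π ^ ((3:ℝ)/2))))
      filter_upwards [ae_restrict_mem measurableSet_Ioi] with t ht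
      exact (hnormint t (mem_Ioi.1 ht)).symm
  -- Step D: the inner integral over p for fixed t > 0
  have stepD : ∀ t : ℝ, t ∈ Ioi (0:ℝ) →
      ∫ p : EuclideanSpace ℝ (Fin 3), F t p
        = ((t * Real.exp (-(κ ^ 2 * t)) * (π / t) ^ ((3:ℝ)/2)
            * Real.exp (-(B / t)) : ℝ) : ℂ) := by
    intro t ht
    have ht0 : (0:ℝ) < t := mem_Ioi.1 ht
    have hb : 0 < ((t:ℂ)).re := by simpa using ht0
    rw [integral_congr_ae (Filter.Eventually.of_forall (hsplit t))]
    rw [MeasureTheory.integral_const_mul,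
      GaussianFourier.integral_cexp_neg_mul_sq_norm_add hb Complex.I y, h3]
    have e1 : ((π : ℂ) / (t:ℂ)) ^ (((3:ℕ):ℂ)/2) = (((π / t) ^ ((3:ℝ)/2) : ℝ) : ℂ) := by
      rw [Complex.ofReal_cpow (div_nonneg pi_pos.le ht0.le)]
      push_cast
      norm_num
    have e2 : (Complex.I ^ 2 * ((‖y‖:ℝ):ℂ) ^ 2 / (4 * (t:ℂ))) = ((-(B / t) : ℝ) : ℂ) := by
      rw [Complex.I_sq, hBd]
      push_cast
      ring
    rw [e1, e2, ← Complex.ofReal_exp, ← Complex.ofReal_exp]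
    push_cast
    ring
  -- Step E: the remaining real integral
  have stepE : ∫ t in Ioi (0:ℝ),
      t * Real.exp (-(κ ^ 2 * t)) * (π / t) ^ ((3:ℝ)/2) * Real.exp (-(B / t))
        = π ^ 2 / κ * Real.exp (-(κ * ‖y‖)) := by
    set g : ℝ → ℝ := fun t => t ^ (-(1/2) : ℝ) * Real.exp (-(κ^2 * t + B / t)) with hgd
    have e0 : ∀ t ∈ Ioi (0:ℝ),
        t * Real.exp (-(κ ^ 2 * t)) * (π / t) ^ ((3:ℝ)/2) * Real.exp (-(B / t))
          = π ^ ((3:ℝ)/2) * g t := by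
      intro t ht
      have ht0 : (0:ℝ) < t := mem_Ioi.1 ht
      have e1 : (π / t) ^ ((3:ℝ)/2) = π ^ ((3:ℝ)/2) / t ^ ((3:ℝ)/2) :=
        Real.div_rpow pi_pos.le ht0.le ((3:ℝ)/2)
      have e2 : t ^ (-(1/2):ℝ) = t / t ^ ((3:ℝ)/2) := by
        have h5 := Real.rpow_sub ht0 1 ((3:ℝ)/2)
        rw [Real.rpow_one] at h5
        rw [show (-(1/2):ℝ) = 1 - (3:ℝ)/2 by norm_num, h5]
      have ht32 : t ^ ((3:ℝ)/2) ≠ 0 := (Real.rpow_pos_of_pos ht0 _).ne'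
      simp only [hgd]
      rw [e1, e2, show -(κ^2 * t + B / t) = -(κ^2*t) + -(B/t) by ring, Real.exp_add]
      field_simp
    rw [setIntegral_congr_fun measurableSet_Ioi e0, MeasureTheory.integral_const_mul]
    -- substitution t = x^2
    have hsub := MeasureTheory.integral_comp_rpow_Ioi g (p := 2) two_ne_zero
    have e3 : ∀ x ∈ Ioi (0:ℝ),
        (|(2:ℝ)| * x ^ ((2:ℝ) - 1)) • g (x ^ (2:ℝ))
          = 2 * Real.exp (-(κ^2 * x ^ 2 + B / x ^ 2)) := by
      intro x hx
      have hx0 : (0:ℝ) < x := mem_Ioi.1 hx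
      have e4 : x ^ ((2:ℝ)) = x ^ (2:ℕ) := by
        rw [show ((2:ℝ)) = ((2:ℕ):ℝ) by norm_num, Real.rpow_natCast]
      have e5 : (x ^ ((2:ℝ))) ^ (-(1/2) : ℝ) = x⁻¹ := by
        rw [← Real.rpow_mul hx0.le]
        norm_num
        exact Real.rpow_neg_one x
      simp only [hgd, smul_eq_mul]
      rw [e5, e4]
      rw [show ((2:ℝ) - 1) = 1 by norm_num, Real.rpow_one, abs_of_pos (by norm_num : (0:ℝ) < 2)]
      field_simp
    rw [← hsub, setIntegral_congr_fun measurableSet_Ioi e3, MeasureTheory.integral_const_mul,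
      yuk_bessel (κ^2) B hκ2 hB]
    have e6 : Real.sqrt (κ^2) = κ := Real.sqrt_sq hκ.le
    have e7 : Real.sqrt (κ^2 * B) = κ * ‖y‖ / 2 := by
      rw [hBd, show κ^2 * (‖y‖^2/4) = (κ * ‖y‖ / 2)^2 by ring]
      exact Real.sqrt_sq (by positivity)
    rw [e6, e7]
    have e8 : π ^ ((3:ℝ)/2) * Real.sqrt π = π ^ 2 := by
      rw [Real.sqrt_eq_rpow, ← Real.rpow_add pi_pos]
      norm_num
    rw [show 2 * (κ * ‖y‖ / 2) = κ * ‖y‖ by ring]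
    field_simp [← e8]
    exact e8
  calc ∫ p : EuclideanSpace ℝ (Fin 3),
        Complex.exp (Complex.I * ((inner ℝ p y : ℝ) : ℂ)) / ((‖p‖ ^ 2 + κ ^ 2 : ℝ) : ℂ) ^ 2
      = ∫ p : EuclideanSpace ℝ (Fin 3), ∫ t in Ioi (0:ℝ), F t p := by
        exact integral_congr_ae (Filter.Eventually.of_forall stepA)
    _ = ∫ t in Ioi (0:ℝ), ∫ p : EuclideanSpace ℝ (Fin 3), F t p := by
        exact (integral_integral_swap hInt).symm
    _ = ∫ t in Ioi (0:ℝ), ((t * Real.exp (-(κ ^ 2 * t)) * (π / t) ^ ((3:ℝ)/2)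
            * Real.exp (-(B / t)) : ℝ) : ℂ) := by
        exact setIntegral_congr_fun measurableSet_Ioi stepD
    _ = ((∫ t in Ioi (0:ℝ), t * Real.exp (-(κ ^ 2 * t)) * (π / t) ^ ((3:ℝ)/2)
            * Real.exp (-(B / t)) : ℝ) : ℂ) := integral_ofReal
    _ = ((Real.pi ^ 2 / κ) * Real.exp (-κ * ‖y‖) : ℝ) := by
        rw [stepE]; norm_num
end
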